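/- Let G₁ be a k × n₁ matrix over 𝔽₄ whose row space is a quaternary Hermitian LCD [n₁,k,d₁] code, and let G₂ be a k × n₂ matrix over 𝔽₄ whose row space is a quaternary Hermitian self-orthogonal [n₂,k,d₂] code. Then the row space of the k × (n₁+n₂) block matrix (G₁ | G₂) is a quaternary Hermitian LCD code of length n₁+n₂ and dimension k whose minimum weight is at least d₁ + d₂. -/

import Mathlib

open scoped Classical

noncomputable section

/-- The finite field with four elements. -/
abbrev F4 := GaloisField 2 2

/-- The (Hamming) weight of a vector over `F4`: the number of nonzero coordinates. -/
def wt {n : ℕ} (x : Fin n → F4) : ℕ :=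
  (Finset.univ.filter (fun i => x i ≠ 0)).card

/-- Hermitian inner product on `F4^n`: `∑ i, x i * (conj (y i))` with `conj z = z^2`. -/
def hermInner {n : ℕ} (x y : Fin n → F4) : F4 :=
  ∑ i, x i * (y i) ^ 2

/-- Membership in the Hermitian dual `C^{⊥H}` of a code `C`. -/
def inHermDual {n : ℕ} (C : Submodule F4 (Fin n → F4)) (x : Fin n → F4) : Prop :=
  ∀ y ∈ C, hermInner x y = 0

/-- `C` is Hermitian LCD: `C ∩ C^{⊥H} = {0}`. -/
def IsHermLCD {n : ℕ} (C : Submodule F4 (Fin n → F4)) : Prop :=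
  ∀ x ∈ C, inHermDual C x → x = 0

/-- `C` has minimum weight (exactly) `d`. -/
def minWtIs {n : ℕ} (C : Submodule F4 (Fin n → F4)) (d : ℕ) : Prop :=
  (∃ x ∈ C, x ≠ 0 ∧ wt x = d) ∧ ∀ x ∈ C, x ≠ 0 → d ≤ wt x

/-- `C` is a quaternary Hermitian LCD `[n,k,d]` code. -/
def IsHermLCDCode (n k d : ℕ) (C : Submodule F4 (Fin n → F4)) : Prop :=
  Module.finrank F4 C = k ∧ IsHermLCD C ∧ minWtIs C d

/-- `d₄(n,k) = d`: the largest minimum weight among quaternary Hermitian LCD `[n,k]` codes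
is `d`. -/
def d4Is (n k d : ℕ) : Prop :=
  (∃ C : Submodule F4 (Fin n → F4), IsHermLCDCode n k d C) ∧
  (∀ C : Submodule F4 (Fin n → F4), Module.finrank F4 C = k → IsHermLCD C →
    ∃ x ∈ C, x ≠ 0 ∧ wt x ≤ d)

end

section Aux

/-- Weight of an appended vector is the sum of the weights. -/
lemma wt_append {n₁ n₂ : ℕ} (a : Fin n₁ → F4) (b : Fin n₂ → F4) :
    wt (Fin.append a b) = wt a + wt b := by
  classical
  simp only [wt, Finset.card_filter]
  rw [Fin.sum_univ_add]
  simp [Fin.append_left, Fin.append_right]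

/-- Hermitian inner product of appended vectors splits as a sum. -/
lemma hermInner_append {n₁ n₂ : ℕ} (a a' : Fin n₁ → F4) (b b' : Fin n₂ → F4) :
    hermInner (Fin.append a b) (Fin.append a' b') = hermInner a a' + hermInner b b' := by
  simp only [hermInner]
  rw [Fin.sum_univ_add]
  simp [Fin.append_left, Fin.append_right]

/-- Linear combinations commute with `Fin.append`. -/
lemma sum_smul_append {k n₁ n₂ : ℕ} (c : Fin k → F4) (f : Fin k → Fin n₁ → F4)
    (g : Fin k → Fin n₂ → F4) :
    ∑ i, c i • Fin.append (f i) (g i) = Fin.append (∑ i, c i • f i) (∑ i, c i • g i) := by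
  funext j
  refine Fin.addCases (fun j => ?_) (fun j => ?_) j <;>
    simp [Finset.sum_apply, Fin.append_left, Fin.append_right]

end Aux

/-- juxtaposing a generator matrix of a Hermitian LCD `[n₁,k,d₁]` code with a
generator matrix of a Hermitian self-orthogonal `[n₂,k,d₂]` code gives a Hermitian LCD
code of length `n₁+n₂`, dimension `k` and minimum weight at least `d₁+d₂`. -/
theorem stmt1 (k n₁ n₂ d₁ d₂ : ℕ)
    (G₁ : Matrix (Fin k) (Fin n₁) F4) (G₂ : Matrix (Fin k) (Fin n₂) F4)
    (hG₁ : IsHermLCDCode n₁ k d₁ (Submodule.span F4 (Set.range fun i => G₁ i)))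
    (hG₂fr : Module.finrank F4 (Submodule.span F4 (Set.range fun i => G₂ i)) = k)
    (hG₂so : ∀ x ∈ Submodule.span F4 (Set.range fun i => G₂ i),
      inHermDual (Submodule.span F4 (Set.range fun i => G₂ i)) x)
    (hG₂d : minWtIs (Submodule.span F4 (Set.range fun i => G₂ i)) d₂) :
    Module.finrank F4
        (Submodule.span F4 (Set.range fun i => Fin.append (G₁ i) (G₂ i))) = k ∧
    IsHermLCD (Submodule.span F4 (Set.range fun i => Fin.append (G₁ i) (G₂ i))) ∧
    ∀ x ∈ Submodule.span F4 (Set.range fun i => Fin.append (G₁ i) (G₂ i)),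
      x ≠ 0 → d₁ + d₂ ≤ wt x := by
  classical
  obtain ⟨hfr₁, hlcd₁, _, hmin₁⟩ := hG₁
  have hmin₂ := hG₂d.2
  -- the rows of G₁ and of G₂ are linearly independent
  have hli₁ : LinearIndependent F4 (fun i => G₁ i) := by
    rw [linearIndependent_iff_card_eq_finrank_span]
    simpa [Set.finrank] using hfr₁.symm
  have hli₂ : LinearIndependent F4 (fun i => G₂ i) := by
    rw [linearIndependent_iff_card_eq_finrank_span]
    simpa [Set.finrank] using hG₂fr.symm
  have hli₁' := Fintype.linearIndependent_iff.mp hli₁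
  have hli₂' := Fintype.linearIndependent_iff.mp hli₂
  -- the appended rows are linearly independent
  have hli : LinearIndependent F4 (fun i => Fin.append (G₁ i) (G₂ i)) := by
    rw [Fintype.linearIndependent_iff]
    intro c hc
    rw [sum_smul_append c G₁ G₂] at hc
    have h1 : (∑ i, c i • G₁ i) = 0 := by
      funext j
      have := congrFun hc (Fin.castAdd n₂ j)
      simpa [Fin.append_left] using this
    exact hli₁' c h1
  have hfr : Module.finrank F4
      (Submodule.span F4 (Set.range fun i => Fin.append (G₁ i) (G₂ i))) = k := by
    have := finrank_span_eq_card hli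
    simpa [Set.finrank] using this
  refine ⟨hfr, ?_, ?_⟩
  · -- LCD
    intro x hx hdual
    obtain ⟨c, rfl⟩ := (Submodule.mem_span_range_iff_exists_fun F4).mp hx
    rw [sum_smul_append c G₁ G₂] at hdual ⊢
    set a := ∑ i, c i • G₁ i with ha
    set b := ∑ i, c i • G₂ i with hb
    have hbmem : b ∈ Submodule.span F4 (Set.range fun i => G₂ i) :=
      (Submodule.mem_span_range_iff_exists_fun F4).mpr ⟨c, rfl⟩
    have hamem : a ∈ Submodule.span F4 (Set.range fun i => G₁ i) :=
      (Submodule.mem_span_range_iff_exists_fun F4).mpr ⟨c, rfl⟩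
    have hadual : inHermDual (Submodule.span F4 (Set.range fun i => G₁ i)) a := by
      intro a' ha'
      obtain ⟨c', rfl⟩ := (Submodule.mem_span_range_iff_exists_fun F4).mp ha'
      set b' := ∑ i, c' i • G₂ i with hb'
      have hb'mem : b' ∈ Submodule.span F4 (Set.range fun i => G₂ i) :=
        (Submodule.mem_span_range_iff_exists_fun F4).mpr ⟨c', rfl⟩
      have hymem : Fin.append (∑ i, c' i • G₁ i) b' ∈
          Submodule.span F4 (Set.range fun i => Fin.append (G₁ i) (G₂ i)) := by
        refine (Submodule.mem_span_range_iff_exists_fun F4).mpr ⟨c', ?_⟩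
        rw [sum_smul_append c' G₁ G₂]
      have h0 := hdual _ hymem
      rw [hermInner_append] at h0
      have hbb' : hermInner b b' = 0 := hG₂so b hbmem b' hb'mem
      rw [hbb', add_zero] at h0
      exact h0
    have ha0 : a = 0 := hlcd₁ a hamem hadual
    have hc0 : ∀ i, c i = 0 := hli₁' c (by rw [← ha]; exact ha0)
    have hb0 : b = 0 := by
      rw [hb]
      simp [hc0]
    rw [ha0, hb0]
    funext j
    refine Fin.addCases (fun j => ?_) (fun j => ?_) j <;>
      simp [Fin.append_left, Fin.append_right]
  · -- minimum weight bound
    intro x hx hx0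
    obtain ⟨c, rfl⟩ := (Submodule.mem_span_range_iff_exists_fun F4).mp hx
    rw [sum_smul_append c G₁ G₂] at hx0 ⊢
    set a := ∑ i, c i • G₁ i with ha
    set b := ∑ i, c i • G₂ i with hb
    have hamem : a ∈ Submodule.span F4 (Set.range fun i => G₁ i) :=
      (Submodule.mem_span_range_iff_exists_fun F4).mpr ⟨c, rfl⟩
    have hbmem : b ∈ Submodule.span F4 (Set.range fun i => G₂ i) :=
      (Submodule.mem_span_range_iff_exists_fun F4).mpr ⟨c, rfl⟩
    have ha0 : a ≠ 0 := by
      intro h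
      have hc0 := hli₁' c h
      apply hx0
      have hb0 : b = 0 := by rw [hb]; simp [hc0]
      rw [h, hb0]
      funext j
      refine Fin.addCases (fun j => ?_) (fun j => ?_) j <;>
        simp [Fin.append_left, Fin.append_right]
    have hb0 : b ≠ 0 := by
      intro h
      exact ha0 (funext fun j => by
        have hc0 := hli₂' c h
        simp [ha, hc0])
    rw [wt_append]
    exact Nat.add_le_add (hmin₁ a hamem ha0) (hmin₂ b hbmem hb0)
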